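/- arXiv:2507.01491 — 2 statements merged into one kernel-verified Lean document; each statement's English description precedes it below -/
import Mathlib

section
/- Let a, b, ω, ω_l be real numbers with ω > 0 and ω_l > 0, and define θ(ω_f) = arctan(b / (a + ω_l/(ω_f - ω_l))) + arctan(ω/ω_l) - arctan(ω/ω_f) for ω_f > ω_l. If a > 0 and b > 0, then θ is strictly monotonically increasing in ω_f on (ω_l, ∞), so its supremum over ω_f ∈ (ω_l, ∞) equals the limit as ω_f → ∞, namely arctan(b/a) + arctan(ω/ω_l). -/
open Real Set Filter Topology

theorem cglp_phase_strictMono_sup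
    (a b ω ωl : ℝ) (hω : ω > 0) (hωl : ωl > 0) (ha : a > 0) (hb : b > 0)
    (θ : ℝ → ℝ)
    (hθ : ∀ ωf, ωf > ωl →
      θ ωf = arctan (b / (a + ωl / (ωf - ωl))) + arctan (ω / ωl) - arctan (ω / ωf)) :
    StrictMonoOn θ (Ioi ωl) ∧
      sSup (θ '' Ioi ωl) = arctan (b / a) + arctan (ω / ωl) := by
  set L := arctan (b / a) + arctan (ω / ωl) with hL
  -- helper facts
  have hden : ∀ x : ℝ, x > ωl → 0 < a + ωl / (x - ωl) := by
    intro x hx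
    have : 0 < ωl / (x - ωl) := div_pos hωl (by linarith)
    linarith
  have hmono : StrictMonoOn θ (Ioi ωl) := by
    intro x hx y hy hxy
    simp only [mem_Ioi] at hx hy
    rw [hθ x hx, hθ y hy]
    have h1 : arctan (b / (a + ωl / (x - ωl))) < arctan (b / (a + ωl / (y - ωl))) := by
      apply Real.arctan_strictMono
      apply div_lt_div_of_pos_left hb (hden y hy)
      have : ωl / (y - ωl) < ωl / (x - ωl) :=
        div_lt_div_of_pos_left hωl (by linarith) (by linarith)
      linarith
    have h2 : arctan (ω / y) < arctan (ω / x) := by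
      apply Real.arctan_strictMono
      exact div_lt_div_of_pos_left hω (by linarith) hxy
    linarith
  refine ⟨hmono, ?_⟩
  have hub : ∀ z ∈ Ioi ωl, θ z ≤ L := by
    intro z hz
    simp only [mem_Ioi] at hz
    rw [hθ z hz, hL]
    have h1 : arctan (b / (a + ωl / (z - ωl))) ≤ arctan (b / a) := by
      apply le_of_lt; apply Real.arctan_strictMono
      apply div_lt_div_of_pos_left hb ha
      have : 0 < ωl / (z - ωl) := div_pos hωl (by linarith)
      linarith
    have h2 : 0 < arctan (ω / z) := by
      rw [← Real.arctan_zero]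
      exact Real.arctan_strictMono (div_pos hω (by linarith))
    linarith
  have htend : Tendsto θ atTop (𝓝 L) := by
    have h1 : Tendsto (fun x : ℝ => ωl / (x - ωl)) atTop (𝓝 0) := by
      apply Tendsto.div_atTop tendsto_const_nhds
      exact tendsto_atTop_add_const_right atTop (-ωl) tendsto_id |>.congr (fun x => by simp only [id]; ring)
    have h2 : Tendsto (fun x : ℝ => ω / x) atTop (𝓝 0) :=
      Tendsto.div_atTop tendsto_const_nhds tendsto_id
    have hf : Tendsto (fun x : ℝ =>
        arctan (b / (a + ωl / (x - ωl))) + arctan (ω / ωl) - arctan (ω / x)) atTop (𝓝 L) := by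
      have t1 : Tendsto (fun x : ℝ => arctan (b / (a + ωl / (x - ωl)))) atTop
          (𝓝 (arctan (b / a))) := by
        have : Tendsto (fun x : ℝ => b / (a + ωl / (x - ωl))) atTop (𝓝 (b / a)) := by
          have := (tendsto_const_nhds (x := a) (f := atTop)).add h1
          simp only [add_zero] at this
          exact (tendsto_const_nhds (x := b) (f := atTop)).div this (by positivity)
        exact (Real.continuous_arctan.tendsto _).comp this
      have t2 : Tendsto (fun x : ℝ => arctan (ω / x)) atTop (𝓝 0) := by
        have := (Real.continuous_arctan.tendsto 0).comp h2
        simpa [Function.comp_def] using this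
      have := (t1.add (tendsto_const_nhds (x := arctan (ω / ωl)) (f := atTop))).sub t2
      simpa [hL] using this
    apply hf.congr'
    filter_upwards [eventually_gt_atTop ωl] with x hx
    exact (hθ x hx).symm
  have hlub : IsLUB (θ '' Ioi ωl) L := by
    constructor
    · rintro _ ⟨z, hz, rfl⟩
      exact hub z hz
    · intro u hu
      refine le_of_tendsto htend ?_
      filter_upwards [eventually_gt_atTop ωl] with x hx
      exact hu ⟨x, hx, rfl⟩
  exact hlub.csSup_eq ⟨θ (ωl + 1), ⟨ωl + 1, by simp, rfl⟩⟩
end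

section
/- Let ω_r > 0, A_ρ ∈ (−1,1), Θ_D(ω) → Θ_∞ > 0 as ω → ∞, and consider the conventional CgLp numerator H₁⁰(ω) = ω_r(jω + ω_r)^{−1}(1 + jΘ_D(ω)) (zero feedthrough) and for n = 3, H₃(ω) = ω_r(3jω + ω_r)^{−1} jΘ_D(ω). Then lim_{ω→∞} |H₃(ω)|/|H₁⁰(ω)| = Θ_∞/(3√(1 + Θ_∞²)), which is strictly positive. -/
open Real Filter Topology Complex

theorem gfore_harmonic_ratio_limit_pos (ωr Aρ : ℝ) (hωr : 0 < ωr)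
    (hA : Aρ ∈ Set.Ioo (-1 : ℝ) 1)
    (ΘD : ℝ → ℝ) (Θinf : ℝ) (hΘinf : 0 < Θinf) (hΘ : Tendsto ΘD atTop (𝓝 Θinf))
    (H₁ H₃ : ℝ → ℂ)
    (hH1 : ∀ ω : ℝ, H₁ ω = (ωr : ℂ) * (Complex.I * ω + ωr)⁻¹ * (1 + Complex.I * (ΘD ω)))
    (hH3 : ∀ ω : ℝ, H₃ ω = (ωr : ℂ) * (3 * Complex.I * ω + ωr)⁻¹ * (Complex.I * (ΘD ω))) :
    Tendsto (fun ω : ℝ => ‖H₃ ω‖ / ‖H₁ ω‖) atTop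
        (𝓝 (Θinf / (3 * Real.sqrt (1 + Θinf ^ 2)))) ∧
      0 < Θinf / (3 * Real.sqrt (1 + Θinf ^ 2)) := by
  have hs : 0 < Real.sqrt (1 + Θinf ^ 2) := Real.sqrt_pos.2 (by positivity)
  refine ⟨?_, by positivity⟩
  -- abs computations
  have habs1 : ∀ ω : ℝ, ‖H₁ ω‖ =
      ωr * (Real.sqrt (ωr^2 + ω^2))⁻¹ * Real.sqrt (1 + (ΘD ω)^2) := by
    intro ω
    rw [hH1, norm_mul, norm_mul, norm_inv]
    simp [Complex.norm_def, Complex.normSq_apply]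
    ring_nf
    rw [abs_of_pos hωr]
  have habs3 : ∀ ω : ℝ, ‖H₃ ω‖ =
      ωr * (Real.sqrt (ωr^2 + ω^2*9))⁻¹ * |ΘD ω| := by
    intro ω
    rw [hH3, norm_mul, norm_mul, norm_inv]
    simp [Complex.norm_def, Complex.normSq_apply]
    ring_nf
    left; rw [abs_of_pos hωr]
  -- the ratio equals F
  have heq : ∀ ω : ℝ, ‖H₃ ω‖ / ‖H₁ ω‖ =
      (|ΘD ω| / Real.sqrt (1 + (ΘD ω)^2)) *
        Real.sqrt ((ωr^2 + ω^2) / (ωr^2 + ω^2*9)) := by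
    intro ω
    rw [habs1, habs3, Real.sqrt_div (by positivity)]
    have h1 : 0 < Real.sqrt (ωr^2 + ω^2) := Real.sqrt_pos.2 (by positivity)
    have h9 : 0 < Real.sqrt (ωr^2 + ω^2*9) := Real.sqrt_pos.2 (by positivity)
    have hsθ : 0 < Real.sqrt (1 + (ΘD ω)^2) := Real.sqrt_pos.2 (by positivity)
    field_simp
  rw [tendsto_congr heq]
  -- limit of the sqrt factor
  have h0 : Tendsto (fun ω : ℝ => ωr^2 / ω^2) atTop (𝓝 0) := by
    have h : Tendsto (fun ω : ℝ => ω^2) atTop atTop := tendsto_pow_atTop (by norm_num)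
    simpa [div_eq_mul_inv] using h.inv_tendsto_atTop.const_mul (ωr^2)
  have hg : Tendsto (fun x : ℝ => (x + 1) / (x + 9)) (𝓝 0) (𝓝 (1/9)) := by
    have : ContinuousAt (fun x : ℝ => (x + 1) / (x + 9)) 0 :=
      ContinuousAt.div (by fun_prop) (by fun_prop) (by norm_num)
    simpa using this.tendsto
  have hq : Tendsto (fun ω : ℝ => (ωr^2 + ω^2) / (ωr^2 + ω^2*9)) atTop (𝓝 (1/9)) := by
    apply (hg.comp h0).congr'
    filter_upwards [eventually_gt_atTop 0] with ω hω
    have hω2 : (ω:ℝ)^2 ≠ 0 := by positivity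
    simp only [Function.comp_def]
    field_simp
  have hsq : Tendsto (fun ω : ℝ => Real.sqrt ((ωr^2 + ω^2) / (ωr^2 + ω^2*9))) atTop
      (𝓝 (1/3)) := by
    rw [show (1/3 : ℝ) = Real.sqrt (1/9) by
      rw [show (1/9 : ℝ) = (1/3)^2 by norm_num, Real.sqrt_sq (by norm_num)]]
    simpa [Function.comp_def] using (Real.continuous_sqrt.continuousAt (x := (1/9 : ℝ))).tendsto.comp hq
  -- limit of the θ factor
  have hθabs : Tendsto (fun ω => |ΘD ω|) atTop (𝓝 Θinf) := by
    simpa [abs_of_pos hΘinf] using hΘ.abs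
  have hθs : Tendsto (fun ω => Real.sqrt (1 + (ΘD ω)^2)) atTop (𝓝 (Real.sqrt (1 + Θinf^2))) :=
    (Real.continuous_sqrt.continuousAt.tendsto).comp (tendsto_const_nhds.add (hΘ.pow 2))
  have hF := (hθabs.div hθs hs.ne').mul hsq
  convert hF using 2
  field_simp
  ring
  simp only [Pi.div_apply]
  field_simp
  ring
end
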